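/- arXiv:1508.06425 — 3 statements merged into one kernel-verified Lean document; each statement's English description precedes it below -/
import Mathlib

section
/- Let ℓ₀, ℓ₁, ℓ₂ > 0 satisfy |ℓ₁ − ℓ₂| ≤ ℓ₀ ≤ ℓ₁ + ℓ₂, let m := (ℓ₁ + ℓ₂ − ℓ₀)/2, and let θ₀ := arccos((cosh ℓ₁ · cosh ℓ₂ − cosh ℓ₀)/(sinh ℓ₁ · sinh ℓ₂)) ∈ [0, π]. Then ℓ₁ − m ≥ ℓ₁ · sin²(θ₀/2). (This is Lemma 2.1(a) of the paper for curvature −1: in a geodesic triangle with vertices x₀, x₁, x₂ in the hyperbolic plane, the Gromov product satisfies (x₀|x₂)_{x₁} ≥ d(x₀,x₁)·sin²(θ₀/2), where θ₀ is the angle at x₀.) -/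
open Real

lemma sinh_le_self_mul_cosh {x : ℝ} (hx : 0 ≤ x) : Real.sinh x ≤ x * Real.cosh x := by
  have hmono : MonotoneOn (fun y : ℝ => y * Real.cosh y - Real.sinh y) (Set.Ici 0) := by
    have hd : ∀ y : ℝ, HasDerivAt (fun y : ℝ => y * Real.cosh y - Real.sinh y)
        (y * Real.sinh y) y := by
      intro y
      have h1 := ((hasDerivAt_id y).mul (Real.hasDerivAt_cosh y)).sub (Real.hasDerivAt_sinh y)
      refine h1.congr_deriv ?_
      simp only [id_eq]
      ring
    apply monotoneOn_of_deriv_nonneg (convex_Ici 0)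
    · exact (Continuous.sub (continuous_id.mul Real.continuous_cosh)
        Real.continuous_sinh).continuousOn
    · intro y hy
      exact (hd y).differentiableAt.differentiableWithinAt
    · intro y hy
      rw [interior_Ici, Set.mem_Ioi] at hy
      rw [(hd y).deriv]
      exact mul_nonneg hy.le (Real.sinh_nonneg_iff.mpr hy.le)
  have := hmono (Set.self_mem_Ici) (Set.mem_Ici.mpr hx) hx
  simpa using this

/-- Lemma 2.1(a) of the paper for curvature `-1`: in a geodesic triangle of the hyperbolic
plane with side lengths `ℓ₀, ℓ₁, ℓ₂`, angle `θ₀` opposite to the side `ℓ₀`, and Gromov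
product `m = (ℓ₁ + ℓ₂ - ℓ₀)/2`, one has `ℓ₁ - m ≥ ℓ₁ · sin²(θ₀/2)`. -/
theorem gromov_product_ge_sin_sq (ℓ₀ ℓ₁ ℓ₂ m θ₀ : ℝ)
    (h₀ : 0 < ℓ₀) (h₁ : 0 < ℓ₁) (h₂ : 0 < ℓ₂)
    (htri₁ : |ℓ₁ - ℓ₂| ≤ ℓ₀) (htri₂ : ℓ₀ ≤ ℓ₁ + ℓ₂)
    (hm : m = (ℓ₁ + ℓ₂ - ℓ₀) / 2)
    (hθ : θ₀ = arccos ((cosh ℓ₁ * cosh ℓ₂ - cosh ℓ₀) / (sinh ℓ₁ * sinh ℓ₂))) :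
    ℓ₁ - m ≥ ℓ₁ * sin (θ₀ / 2) ^ 2 := by
  obtain ⟨habs₁, habs₂⟩ := abs_le.mp htri₁
  set u : ℝ := ℓ₁ - m with hu_def
  set v : ℝ := ℓ₂ - m with hv_def
  have hm0 : 0 ≤ m := by rw [hm]; linarith
  have hu0 : 0 ≤ u := by rw [hu_def, hm]; linarith
  have hv0 : 0 ≤ v := by rw [hv_def, hm]; linarith
  have hℓ₀ : ℓ₀ = u + v := by rw [hu_def, hv_def, hm]; ring
  have hℓ₁ : ℓ₁ = u + m := by rw [hu_def]; ring
  have hℓ₂ : ℓ₂ = v + m := by rw [hv_def]; ring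
  have hs₁ : 0 < sinh ℓ₁ := Real.sinh_pos_iff.mpr h₁
  have hs₂ : 0 < sinh ℓ₂ := Real.sinh_pos_iff.mpr h₂
  have hs : 0 < sinh ℓ₁ * sinh ℓ₂ := mul_pos hs₁ hs₂
  set c : ℝ := (cosh ℓ₁ * cosh ℓ₂ - cosh ℓ₀) / (sinh ℓ₁ * sinh ℓ₂) with hc_def
  -- key algebraic identity
  have e1 : sinh ℓ₁ * sinh ℓ₂ - (cosh ℓ₁ * cosh ℓ₂ - cosh ℓ₀) = 2 * sinh u * sinh v := by
    rw [hℓ₀, hℓ₁, hℓ₂, Real.cosh_add, Real.cosh_add, Real.cosh_add, Real.sinh_add,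
      Real.sinh_add]
    have hm2 : Real.cosh m ^ 2 - Real.sinh m ^ 2 = 1 := Real.cosh_sq_sub_sinh_sq m
    linear_combination (Real.sinh u * Real.sinh v - Real.cosh u * Real.cosh v) * hm2
  have hsu : 0 ≤ sinh u := Real.sinh_nonneg_iff.mpr hu0
  have hsv : 0 ≤ sinh v := Real.sinh_nonneg_iff.mpr hv0
  have hc1 : c ≤ 1 := by
    rw [hc_def, div_le_one hs]
    nlinarith
  have hcm1 : -1 ≤ c := by
    rw [hc_def, le_div_iff₀ hs]
    have hcc : cosh ℓ₀ ≤ cosh (ℓ₁ + ℓ₂) := by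
      rw [Real.cosh_le_cosh, abs_of_pos h₀, abs_of_pos (by linarith : (0:ℝ) < ℓ₁ + ℓ₂)]
      exact htri₂
    rw [Real.cosh_add] at hcc
    nlinarith
  have hcos : cos θ₀ = c := by rw [hθ]; exact Real.cos_arccos hcm1 hc1
  have hsin : sin (θ₀ / 2) ^ 2 = (1 - c) / 2 := by
    have h2 : Real.cos (θ₀ / 2) ^ 2 = 1 / 2 + Real.cos (2 * (θ₀ / 2)) / 2 := Real.cos_sq _
    have h3 : Real.sin (θ₀ / 2) ^ 2 = 1 - Real.cos (θ₀ / 2) ^ 2 := Real.sin_sq _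
    rw [h3, h2]
    have : 2 * (θ₀ / 2) = θ₀ := by ring
    rw [this, hcos]
    ring
  rw [hsin]
  -- 1 - c = 2 sinh u sinh v / (sinh ℓ₁ sinh ℓ₂)
  have h1mc : 1 - c = 2 * sinh u * sinh v / (sinh ℓ₁ * sinh ℓ₂) := by
    rw [hc_def]
    field_simp
    linarith [e1]
  rw [h1mc, ge_iff_le]
  have hrw : ℓ₁ * (2 * sinh u * sinh v / (sinh ℓ₁ * sinh ℓ₂) / 2)
      = ℓ₁ * (sinh u * sinh v) / (sinh ℓ₁ * sinh ℓ₂) := by ring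
  rw [hrw, div_le_iff₀ hs]
  -- key: (u+m) * sinh u ≤ u * sinh (u+m)
  have key : (u + m) * sinh u ≤ u * sinh (u + m) := by
    rw [Real.sinh_add]
    have hA := sinh_le_self_mul_cosh hu0
    have hB : m ≤ sinh m := Real.self_le_sinh_iff.mpr hm0
    have hC : (1:ℝ) ≤ cosh m := Real.one_le_cosh m
    have hD : 0 ≤ cosh u := (Real.cosh_pos u).le
    nlinarith [mul_nonneg hu0 hsu, mul_le_mul hA hB hm0 (mul_nonneg hu0 hD)]
  have hsv2 : sinh v ≤ sinh (v + m) := Real.sinh_le_sinh.mpr (by linarith)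
  have hfin : (u + m) * (sinh u * sinh v) ≤ u * (sinh (u + m) * sinh (v + m)) := by
    calc (u + m) * (sinh u * sinh v) = ((u + m) * sinh u) * sinh v := by ring
      _ ≤ (u * sinh (u + m)) * sinh v := by
          apply mul_le_mul_of_nonneg_right key hsv
      _ ≤ (u * sinh (u + m)) * sinh (v + m) := by
          apply mul_le_mul_of_nonneg_left hsv2
          exact mul_nonneg hu0 (Real.sinh_nonneg_iff.mpr (by linarith))
      _ = u * (sinh (u + m) * sinh (v + m)) := by ring
  calc ℓ₁ * (sinh u * sinh v) = (u + m) * (sinh u * sinh v) := by rw [hℓ₁]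
    _ ≤ u * (sinh (u + m) * sinh (v + m)) := hfin
    _ = (ℓ₁ - m) * (sinh ℓ₁ * sinh ℓ₂) := by rw [← hℓ₁, ← hℓ₂, ← hu_def]
end

section
/- Let ℓ₀, ℓ₁, ℓ₂ > 0 satisfy |ℓ₁ − ℓ₂| ≤ ℓ₀ ≤ ℓ₁ + ℓ₂, let m := (ℓ₁ + ℓ₂ − ℓ₀)/2, and let θ₀ := arccos((cosh ℓ₁ · cosh ℓ₂ − cosh ℓ₀)/(sinh ℓ₁ · sinh ℓ₂)) ∈ [0, π]. Then θ₀ ≤ 4·exp(−m). (This is Lemma 2.1(b) of the paper for curvature −1: the angle of a hyperbolic geodesic triangle at a vertex x₀ is at most 4·e^{−(x₁|x₂)_{x₀}}.) -/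
open Real

lemma sinh_le_exp_neg_mul_sinh_add {x m : ℝ} (hx : 0 ≤ x) (hm : 0 ≤ m) :
    sinh x ≤ exp (-m) * sinh (x + m) := by
  have h1 : sinh x * exp m ≤ sinh (x + m) := by
    rw [Real.sinh_add, (Real.cosh_add_sinh m).symm]
    have hsx : 0 ≤ sinh x := Real.sinh_nonneg_iff.2 hx
    have hsm : 0 ≤ sinh m := Real.sinh_nonneg_iff.2 hm
    have hcs : sinh x ≤ cosh x := (Real.sinh_lt_cosh x).le
    nlinarith
  have he : 0 < exp (-m) := Real.exp_pos _
  calc sinh x = exp (-m) * (sinh x * exp m) := by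
        rw [← mul_assoc, mul_comm (exp (-m)), mul_assoc, ← Real.exp_add]
        simp
    _ ≤ exp (-m) * sinh (x + m) := by nlinarith

set_option maxHeartbeats 1000000 in
/-- Lemma 2.1(b) of the paper for curvature `-1`: the angle `θ₀` of a hyperbolic geodesic
triangle at a vertex is at most `4·e^{-m}` where `m` is the Gromov product of the two other
vertices seen from that vertex. -/
theorem angle_le_four_exp_neg_gromov (ℓ₀ ℓ₁ ℓ₂ m θ₀ : ℝ)
    (h₀ : 0 < ℓ₀) (h₁ : 0 < ℓ₁) (h₂ : 0 < ℓ₂)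
    (htri₁ : |ℓ₁ - ℓ₂| ≤ ℓ₀) (htri₂ : ℓ₀ ≤ ℓ₁ + ℓ₂)
    (hm : m = (ℓ₁ + ℓ₂ - ℓ₀) / 2)
    (hθ : θ₀ = arccos ((cosh ℓ₁ * cosh ℓ₂ - cosh ℓ₀) / (sinh ℓ₁ * sinh ℓ₂))) :
    θ₀ ≤ 4 * exp (-m) := by
  set a : ℝ := (ℓ₀ + ℓ₁ - ℓ₂) / 2 with ha
  set b : ℝ := (ℓ₀ + ℓ₂ - ℓ₁) / 2 with hb
  obtain ⟨habs1, habs2⟩ := abs_le.1 htri₁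
  have ha0 : 0 ≤ a := by rw [ha]; linarith
  have hb0 : 0 ≤ b := by rw [hb]; linarith
  have hm0 : 0 ≤ m := by rw [hm]; linarith
  have hs₁ : 0 < sinh ℓ₁ := Real.sinh_pos_iff.2 h₁
  have hs₂ : 0 < sinh ℓ₂ := Real.sinh_pos_iff.2 h₂
  set c : ℝ := (cosh ℓ₁ * cosh ℓ₂ - cosh ℓ₀) / (sinh ℓ₁ * sinh ℓ₂) with hc
  -- bounds on c
  have hcoshsub : cosh (ℓ₁ - ℓ₂) ≤ cosh ℓ₀ := by
    rw [Real.cosh_le_cosh]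
    rw [abs_of_pos h₀]
    exact htri₁
  have hcoshadd : cosh ℓ₀ ≤ cosh (ℓ₁ + ℓ₂) := by
    rw [Real.cosh_le_cosh, abs_of_pos h₀, abs_of_pos (by linarith : (0:ℝ) < ℓ₁ + ℓ₂)]
    exact htri₂
  have hcle : c ≤ 1 := by
    rw [hc, div_le_one (by positivity)]
    rw [Real.cosh_sub] at hcoshsub
    linarith
  have hcge : -1 ≤ c := by
    rw [hc, le_div_iff₀ (by positivity)]
    rw [Real.cosh_add] at hcoshadd
    linarith
  have hcosθ : cos θ₀ = c := by rw [hθ, Real.cos_arccos hcge hcle]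
  have hθ0 : 0 ≤ θ₀ := hθ ▸ Real.arccos_nonneg _
  have hθπ : θ₀ ≤ π := hθ ▸ Real.arccos_le_pi _
  -- key identity : 1 - c = 2 sinh a sinh b / (sinh ℓ₁ sinh ℓ₂)
  have hid : 1 - c = 2 * sinh a * sinh b / (sinh ℓ₁ * sinh ℓ₂) := by
    rw [hc]
    have h1 : ℓ₀ = a + b := by rw [ha, hb]; ring
    have h2 : ℓ₁ - ℓ₂ = a - b := by rw [ha, hb]; ring
    have h3 : cosh ℓ₀ - cosh (ℓ₁ - ℓ₂) = 2 * sinh a * sinh b := by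
      rw [h1, h2, Real.cosh_add, Real.cosh_sub]; ring
    have h4 : cosh ℓ₁ * cosh ℓ₂ - cosh (ℓ₁ - ℓ₂) = sinh ℓ₁ * sinh ℓ₂ := by
      rw [Real.cosh_sub]; ring
    field_simp
    linarith
  -- bound on the product
  have hprod : 2 * sinh a * sinh b ≤ 2 * exp (-m) ^ 2 * (sinh ℓ₁ * sinh ℓ₂) := by
    have hA : sinh a ≤ exp (-m) * sinh ℓ₁ := by
      have : a + m = ℓ₁ := by rw [ha, hm]; ring
      simpa [this] using sinh_le_exp_neg_mul_sinh_add ha0 hm0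
    have hB : sinh b ≤ exp (-m) * sinh ℓ₂ := by
      have : b + m = ℓ₂ := by rw [hb, hm]; ring
      simpa [this] using sinh_le_exp_neg_mul_sinh_add hb0 hm0
    have hsa : 0 ≤ sinh a := Real.sinh_nonneg_iff.2 ha0
    have hsb : 0 ≤ sinh b := Real.sinh_nonneg_iff.2 hb0
    have he : 0 < exp (-m) := Real.exp_pos _
    nlinarith
  have hone_sub : 1 - c ≤ 2 * exp (-m) ^ 2 := by
    rw [hid, div_le_iff₀ (by positivity)]
    nlinarith
  -- Jordan-type inequality
  have hJ : cos θ₀ ≤ 1 - 2 / π ^ 2 * θ₀ ^ 2 :=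
    Real.cos_le_one_sub_mul_cos_sq (by rw [abs_of_nonneg hθ0]; exact hθπ)
  rw [hcosθ] at hJ
  have hπ : (0:ℝ) < π := Real.pi_pos
  have hπ4 : π ≤ 4 := by linarith [Real.pi_le_four]
  have hsq : θ₀ ^ 2 ≤ π ^ 2 * exp (-m) ^ 2 := by
    have h5 : 2 / π ^ 2 * θ₀ ^ 2 ≤ 2 * exp (-m) ^ 2 := by linarith
    have h6 : θ₀ ^ 2 ≤ π ^ 2 * exp (-m) ^ 2 := by
      rw [div_mul_eq_mul_div, div_le_iff₀ (by positivity)] at h5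
      nlinarith
    exact h6
  have he : 0 < exp (-m) := Real.exp_pos _
  have hfin : θ₀ ≤ π * exp (-m) := by
    refine le_of_pow_le_pow_left₀ two_ne_zero (by positivity) ?_
    rw [mul_pow]; exact hsq
  nlinarith
end

section
/- Let ℓ₀, ℓ₁, ℓ₂ > 0 satisfy |ℓ₁ − ℓ₂| ≤ ℓ₀ ≤ ℓ₁ + ℓ₂, let m := (ℓ₁ + ℓ₂ − ℓ₀)/2, and let θ₀ := arccos((cosh ℓ₁ · cosh ℓ₂ − cosh ℓ₀)/(sinh ℓ₁ · sinh ℓ₂)) ∈ [0, π]. If ℓ₁ − m ≥ 1 and ℓ₂ − m ≥ 1, then θ₀ ≥ exp(−m). (This is Lemma 2.1(c) of the paper for curvature −1: if the Gromov products (x₀|x₁)_{x₂} and (x₀|x₂)_{x₁} are both at least 1, then the angle at x₀ is at least e^{−(x₁|x₂)_{x₀}}.) -/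
open Real

lemma cosh_add_sub_cosh_sub (a b : ℝ) :
    Real.cosh (a + b) - Real.cosh (a - b) = 2 * Real.sinh a * Real.sinh b := by
  rw [Real.cosh_add, Real.cosh_sub]; ring

/-- Lemma 2.1(c) of the paper for curvature `-1`: if the Gromov products `ℓ₁ - m` and
`ℓ₂ - m` at the two other vertices are both at least `1`, then the angle `θ₀` at the vertex
is at least `e^{-m}`, where `m` is the Gromov product at that vertex. -/
theorem angle_ge_exp_neg_gromov (ℓ₀ ℓ₁ ℓ₂ m θ₀ : ℝ)
    (h₀ : 0 < ℓ₀) (h₁ : 0 < ℓ₁) (h₂ : 0 < ℓ₂)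
    (htri₁ : |ℓ₁ - ℓ₂| ≤ ℓ₀) (htri₂ : ℓ₀ ≤ ℓ₁ + ℓ₂)
    (hm : m = (ℓ₁ + ℓ₂ - ℓ₀) / 2)
    (hθ : θ₀ = arccos ((cosh ℓ₁ * cosh ℓ₂ - cosh ℓ₀) / (sinh ℓ₁ * sinh ℓ₂)))
    (hg₁ : 1 ≤ ℓ₁ - m) (hg₂ : 1 ≤ ℓ₂ - m) :
    θ₀ ≥ exp (-m) := by
  have hm0 : 0 ≤ m := by rw [hm]; linarith
  have hs1 : 0 < sinh ℓ₁ := Real.sinh_pos_iff.mpr h₁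
  have hs2 : 0 < sinh ℓ₂ := Real.sinh_pos_iff.mpr h₂
  have hS : 0 < sinh ℓ₁ * sinh ℓ₂ := mul_pos hs1 hs2
  have ht0 : 0 < exp (-m) := exp_pos _
  have ht1 : exp (-m) ≤ 1 := by
    rw [← Real.exp_zero]; exact Real.exp_le_exp.mpr (by linarith)
  -- key identity
  have hkeyid : cosh ℓ₀ - cosh (ℓ₁ - ℓ₂) = 2 * sinh (ℓ₁ - m) * sinh (ℓ₂ - m) := by
    have e1 : ℓ₀ = (ℓ₁ - m) + (ℓ₂ - m) := by rw [hm]; ring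
    have e2 : ℓ₁ - ℓ₂ = (ℓ₁ - m) - (ℓ₂ - m) := by ring
    rw [e1, e2]
    exact cosh_add_sub_cosh_sub _ _
  have hsinh_le : ∀ x : ℝ, sinh x ≤ exp x / 2 := by
    intro x
    rw [Real.sinh_eq]
    have := Real.exp_pos (-x)
    linarith
  have hexp2 : Real.exp (-2 : ℝ) ≤ 1 / 2 := by
    rw [Real.exp_neg]
    have h3 : (2 : ℝ) + 1 ≤ Real.exp 2 := Real.add_one_le_exp 2
    have h2 : (0 : ℝ) < Real.exp 2 := Real.exp_pos 2
    have hi : (0 : ℝ) < (Real.exp 2)⁻¹ := by positivity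
    have hinv : (Real.exp 2)⁻¹ * Real.exp 2 = 1 := inv_mul_cancel₀ (ne_of_gt h2)
    nlinarith
  have hsinh_ge : ∀ x : ℝ, 1 ≤ x → (1 - Real.exp (-2)) * exp x / 2 ≤ sinh x := by
    intro x hx
    rw [Real.sinh_eq]
    have hrw : Real.exp (-x) = Real.exp x * Real.exp (-2 * x) := by
      rw [← Real.exp_add]; ring_nf
    have hb : Real.exp (-2 * x) ≤ Real.exp (-2) := Real.exp_le_exp.mpr (by linarith)
    have hp : 0 < Real.exp x := Real.exp_pos x
    nlinarith [Real.exp_pos (-2)]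
  have hqpos : (0 : ℝ) < 1 - Real.exp (-2) := by linarith
  -- core estimate
  have hcore : exp (-m) ^ 2 * (sinh ℓ₁ * sinh ℓ₂)
      ≤ 4 * sinh (ℓ₁ - m) * sinh (ℓ₂ - m) := by
    have b1 : sinh ℓ₁ ≤ exp ℓ₁ / 2 := hsinh_le ℓ₁
    have b2 : sinh ℓ₂ ≤ exp ℓ₂ / 2 := hsinh_le ℓ₂
    have c1 : (1 - Real.exp (-2)) * exp (ℓ₁ - m) / 2 ≤ sinh (ℓ₁ - m) := hsinh_ge _ hg₁
    have c2 : (1 - Real.exp (-2)) * exp (ℓ₂ - m) / 2 ≤ sinh (ℓ₂ - m) := hsinh_ge _ hg₂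
    have hts : exp (-m) ^ 2 * (exp ℓ₁ * exp ℓ₂) = exp (ℓ₁ - m) * exp (ℓ₂ - m) := by
      rw [sq, ← Real.exp_add, ← Real.exp_add, ← Real.exp_add, ← Real.exp_add]
      congr 1; ring
    have hpg1 : 0 < exp (ℓ₁ - m) := Real.exp_pos _
    have hpg2 : 0 < exp (ℓ₂ - m) := Real.exp_pos _
    -- step 1
    have P1 : sinh ℓ₁ * sinh ℓ₂ ≤ exp ℓ₁ / 2 * (exp ℓ₂ / 2) :=
      mul_le_mul b1 b2 (le_of_lt hs2) (by positivity)
    have P1' : exp (-m) ^ 2 * (sinh ℓ₁ * sinh ℓ₂)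
        ≤ exp (-m) ^ 2 * (exp ℓ₁ / 2 * (exp ℓ₂ / 2)) :=
      mul_le_mul_of_nonneg_left P1 (sq_nonneg _)
    have e3 : exp (-m) ^ 2 * (exp ℓ₁ / 2 * (exp ℓ₂ / 2))
        = exp (ℓ₁ - m) * exp (ℓ₂ - m) / 4 := by
      rw [show exp (-m) ^ 2 * (exp ℓ₁ / 2 * (exp ℓ₂ / 2))
          = exp (-m) ^ 2 * (exp ℓ₁ * exp ℓ₂) / 4 from by ring, hts]
    have step1 : exp (-m) ^ 2 * (sinh ℓ₁ * sinh ℓ₂)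
        ≤ exp (ℓ₁ - m) * exp (ℓ₂ - m) / 4 := by
      calc exp (-m) ^ 2 * (sinh ℓ₁ * sinh ℓ₂)
          ≤ exp (-m) ^ 2 * (exp ℓ₁ / 2 * (exp ℓ₂ / 2)) := P1'
        _ = exp (ℓ₁ - m) * exp (ℓ₂ - m) / 4 := e3
    -- step 2
    have P4 : (1 - Real.exp (-2)) * exp (ℓ₁ - m) / 2 *
        ((1 - Real.exp (-2)) * exp (ℓ₂ - m) / 2)
        ≤ sinh (ℓ₁ - m) * sinh (ℓ₂ - m) :=
      mul_le_mul c1 c2 (by positivity) (by positivity)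
    have e4 : (1 - Real.exp (-2)) * exp (ℓ₁ - m) / 2 *
        ((1 - Real.exp (-2)) * exp (ℓ₂ - m) / 2)
        = (1 - Real.exp (-2)) ^ 2 * (exp (ℓ₁ - m) * exp (ℓ₂ - m)) / 4 := by ring
    have hq2 : (1 / 4 : ℝ) ≤ (1 - Real.exp (-2)) ^ 2 := by nlinarith
    have P5 : (1 / 4 : ℝ) * (exp (ℓ₁ - m) * exp (ℓ₂ - m))
        ≤ (1 - Real.exp (-2)) ^ 2 * (exp (ℓ₁ - m) * exp (ℓ₂ - m)) :=
      mul_le_mul_of_nonneg_right hq2 (by positivity)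
    rw [e4] at P4
    linarith
  -- deduce c ≤ cos t
  have hcos : (cosh ℓ₁ * cosh ℓ₂ - cosh ℓ₀) / (sinh ℓ₁ * sinh ℓ₂)
      ≤ Real.cos (exp (-m)) := by
    have h1 : (cosh ℓ₁ * cosh ℓ₂ - cosh ℓ₀) / (sinh ℓ₁ * sinh ℓ₂)
        ≤ 1 - exp (-m) ^ 2 / 2 := by
      rw [div_le_iff₀ hS]
      have hcs : Real.cosh (ℓ₁ - ℓ₂) = cosh ℓ₁ * cosh ℓ₂ - sinh ℓ₁ * sinh ℓ₂ :=
        Real.cosh_sub ℓ₁ ℓ₂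
      have expand : (1 - exp (-m) ^ 2 / 2) * (sinh ℓ₁ * sinh ℓ₂)
          = sinh ℓ₁ * sinh ℓ₂ - exp (-m) ^ 2 * (sinh ℓ₁ * sinh ℓ₂) / 2 := by ring
      linarith [hcore, hkeyid]
    exact le_trans h1 Real.one_sub_sq_div_two_le_cos
  have harc : Real.arccos (Real.cos (exp (-m)))
      ≤ Real.arccos ((cosh ℓ₁ * cosh ℓ₂ - cosh ℓ₀) / (sinh ℓ₁ * sinh ℓ₂)) := by
    unfold Real.arccos
    have := Real.monotone_arcsin hcos
    linarith
  have hA : Real.arccos (Real.cos (exp (-m))) = exp (-m) :=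
    Real.arccos_cos (le_of_lt ht0) (le_trans ht1 (by linarith [Real.pi_gt_three]))
  rw [hθ]
  linarith
end
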